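/- Let r, ε > 0, a = √(rε + ε²/4), p₁ = (−a, 0), p₂ = (a, 0), and h(x) = (1/2π)(log|x − p₁| − log|x − p₂|). Then the gradient of h at the origin is ∇h(0) = (1/(π a), 0); in particular |∇h(0)| = 1/(π√(rε + ε²/4)), and ε^{1/2}·|∇h(0)| → 1/(π√r) as ε → 0. -/

import Mathlib

open Real Filter Metric InnerProductSpace

noncomputable section

abbrev E2 := EuclideanSpace ℝ (Fin 2)

/-- The point (a, b) in ℝ². -/
def pt (a b : ℝ) : E2 := (WithLp.equiv 2 (Fin 2 → ℝ)).symm ![a, b]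

/-- Inversion (reflection) across the circle ∂B(c, r). -/
def refl2 (c : E2) (r : ℝ) (x : E2) : E2 := (r ^ 2 / ‖x - c‖ ^ 2) • (x - c) + c
lemma grad_log_norm (p x₀ : E2) (h : x₀ ≠ p) :
    HasGradientAt (fun x => Real.log ‖x - p‖) ((‖x₀ - p‖ ^ 2)⁻¹ • (x₀ - p)) x₀ := by
  have hne : x₀ - p ≠ 0 := sub_ne_zero.2 h
  have hn : ‖x₀ - p‖ ^ 2 ≠ 0 := pow_ne_zero _ (norm_ne_zero_iff.2 hne)
  have hid : HasFDerivAt (fun x : E2 => x - p) (ContinuousLinearMap.id ℝ E2) x₀ :=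
    (hasFDerivAt_id x₀).sub_const p
  have hq : HasFDerivAt (fun x : E2 => (inner ℝ (x - p) (x - p) : ℝ))
      ((fderivInnerCLM ℝ (x₀ - p, x₀ - p)).comp
        ((ContinuousLinearMap.id ℝ E2).prod (ContinuousLinearMap.id ℝ E2))) x₀ :=
    hid.inner ℝ hid
  have hq0 : (inner ℝ (x₀ - p) (x₀ - p) : ℝ) ≠ 0 := by
    rw [real_inner_self_eq_norm_sq]; exact hn
  have hlog := (Real.hasDerivAt_log hq0).comp_hasFDerivAt x₀ hq
  have hmul := hlog.const_mul (1/2 : ℝ)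
  have hfun : (fun x : E2 => Real.log ‖x - p‖)
      = fun x => (1/2 : ℝ) * Real.log (inner ℝ (x - p) (x - p) : ℝ) := by
    funext x
    rw [real_inner_self_eq_norm_sq, Real.log_pow]
    push_cast; ring
  rw [hfun, hasGradientAt_iff_hasFDerivAt]
  convert hmul using 1
  · rfl
  · rfl
  ext v
  simp only [toDual_apply_apply, ContinuousLinearMap.smul_apply, ContinuousLinearMap.comp_apply,
    ContinuousLinearMap.prod_apply, ContinuousLinearMap.id_apply, fderivInnerCLM_apply,
    inner_smul_left, real_inner_self_eq_norm_sq, smul_eq_mul, RingHom.id_apply,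
    starRingEnd_apply, star_trivial]
  rw [real_inner_comm v (x₀ - p)]
  field_simp
  ring

lemma pt_sub (a b c d : ℝ) : pt a b - pt c d = pt (a - c) (b - d) := by
  ext i; fin_cases i <;> simp [pt]

lemma pt_smul (c a b : ℝ) : c • pt a b = pt (c * a) (c * b) := by
  ext i; fin_cases i <;> simp [pt]

lemma pt_zero : pt 0 0 = (0 : E2) := by
  ext i; fin_cases i <;> simp [pt]

lemma pt_norm (a b : ℝ) : ‖pt a b‖ = Real.sqrt (a ^ 2 + b ^ 2) := by
  rw [EuclideanSpace.norm_eq]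
  congr 1
  simp [pt, Fin.sum_univ_two, sq_abs]

lemma comb {f g : E2 → ℝ} {f' g' x : E2} (c : ℝ) (hf : HasGradientAt f f' x)
    (hg : HasGradientAt g g' x) :
    HasGradientAt (fun y => c * (f y - g y)) (c • (f' - g')) x := by
  rw [hasGradientAt_iff_hasFDerivAt] at *
  have := (hf.sub hg).const_mul c
  convert this using 1
  · rfl
  · rfl
  simp [map_smul, map_sub]

/-- The singular function for two equal disks of radius r at distance ε, with
reflection fixed points p₁ = (−a, 0), p₂ = (a, 0), a = √(rε + ε²/4). -/
def hsing (r ε : ℝ) (x : E2) : ℝ :=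
  (1/(2*π)) * (Real.log ‖x - pt (-Real.sqrt (r*ε + ε^2/4)) 0‖
    - Real.log ‖x - pt (Real.sqrt (r*ε + ε^2/4)) 0‖)

lemma grad_hsing (r ε : ℝ) (hr : 0 < r) (hε : 0 < ε) :
    HasGradientAt (hsing r ε) (pt (1/(π * Real.sqrt (r*ε + ε^2/4))) 0) 0 := by
  have hπ : (0:ℝ) < π := Real.pi_pos
  set a := Real.sqrt (r*ε + ε^2/4) with ha_def
  have ha : 0 < a := Real.sqrt_pos.2 (by positivity)
  have hsub1 : (0 : E2) - pt (-a) 0 = pt a 0 := by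
    rw [← pt_zero, pt_sub]; norm_num
  have hsub2 : (0 : E2) - pt a 0 = pt (-a) 0 := by
    rw [← pt_zero, pt_sub]; norm_num
  have hnorm : ∀ s : ℝ, ‖pt s 0‖ = |s| := by
    intro s; rw [pt_norm]; simp [Real.sqrt_sq_eq_abs]
  have hne1 : (0 : E2) ≠ pt (-a) 0 := by
    intro h
    have : ‖(0:E2) - pt (-a) 0‖ = 0 := by rw [← h]; simp
    rw [hsub1, hnorm, abs_of_pos ha] at this; linarith
  have hne2 : (0 : E2) ≠ pt a 0 := by
    intro h
    have : ‖(0:E2) - pt a 0‖ = 0 := by rw [← h]; simp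
    rw [hsub2, hnorm, abs_of_neg (by linarith : -a < 0)] at this; linarith
  have h1 := grad_log_norm (pt (-a) 0) 0 hne1
  have h2 := grad_log_norm (pt a 0) 0 hne2
  have H := comb (1/(2*π)) h1 h2
  rw [hsub1, hsub2] at H
  have hval : (1/(2*π)) • ((‖pt a 0‖ ^ 2)⁻¹ • pt a 0 - (‖pt (-a) 0‖ ^ 2)⁻¹ • pt (-a) 0)
      = pt (1/(π * a)) 0 := by
    rw [hnorm, hnorm, abs_of_pos ha, abs_of_neg (by linarith : -a < 0), neg_neg,
      pt_smul, pt_smul, pt_sub, pt_smul]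
    have e1 : 1/(2*π) * ((a^2)⁻¹ * a - (a^2)⁻¹ * -a) = 1/(π*a) := by
      rw [pow_two, mul_inv]
      field_simp
      ring
    have e2 : 1/(2*π) * ((a^2)⁻¹ * 0 - (a^2)⁻¹ * 0) = (0:ℝ) := by ring
    rw [e1, e2]
  rw [hval] at H
  exact H
theorem stmt9 (r : ℝ) (hr : 0 < r) :
    (∀ ε : ℝ, 0 < ε →
      gradient (hsing r ε) 0 = pt (1/(π * Real.sqrt (r*ε + ε^2/4))) 0 ∧
      ‖gradient (hsing r ε) 0‖ = 1/(π * Real.sqrt (r*ε + ε^2/4))) ∧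
    Tendsto (fun ε : ℝ => Real.sqrt ε * ‖gradient (hsing r ε) 0‖)
      (nhdsWithin 0 (Set.Ioi 0)) (nhds (1/(π * Real.sqrt r))) := by
  have hπ : (0:ℝ) < π := Real.pi_pos
  have key : ∀ ε : ℝ, 0 < ε →
      gradient (hsing r ε) 0 = pt (1/(π * Real.sqrt (r*ε + ε^2/4))) 0 :=
    fun ε hε => (grad_hsing r ε hr hε).gradient
  have nrm : ∀ ε : ℝ, 0 < ε →
      ‖gradient (hsing r ε) 0‖ = 1/(π * Real.sqrt (r*ε + ε^2/4)) := by
    intro ε hε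
    have ha : 0 < Real.sqrt (r*ε + ε^2/4) := Real.sqrt_pos.2 (by positivity)
    rw [key ε hε, pt_norm, show (0:ℝ)^2 = 0 by norm_num, add_zero,
      Real.sqrt_sq (by positivity)]
  refine ⟨fun ε hε => ⟨key ε hε, nrm ε hε⟩, ?_⟩
  have heq : ∀ᶠ ε in nhdsWithin (0:ℝ) (Set.Ioi 0),
      Real.sqrt ε * ‖gradient (hsing r ε) 0‖ = 1/(π * Real.sqrt (r + ε/4)) := by
    filter_upwards [self_mem_nhdsWithin] with ε (hε : 0 < ε)
    rw [nrm ε hε]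
    have h1 : r*ε + ε^2/4 = ε * (r + ε/4) := by ring
    rw [h1, Real.sqrt_mul hε.le]
    have hs : Real.sqrt ε ≠ 0 := ne_of_gt (Real.sqrt_pos.2 hε)
    rw [show π * (Real.sqrt ε * Real.sqrt (r + ε/4))
        = Real.sqrt ε * (π * Real.sqrt (r + ε/4)) by ring,
      mul_one_div, div_mul_cancel_left₀ hs, one_div]
  rw [tendsto_congr' heq]
  have hcont : ContinuousAt (fun ε : ℝ => 1/(π * Real.sqrt (r + ε/4))) 0 := by
    apply ContinuousAt.div continuousAt_const
    · exact continuousAt_const.mul (Real.continuous_sqrt.continuousAt.comp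
        (by fun_prop))
    · simp only [zero_div, add_zero]
      positivity
  have h0 : (1:ℝ)/(π * Real.sqrt (r + 0/4)) = 1/(π * Real.sqrt r) := by norm_num
  have := hcont.tendsto.mono_left (nhdsWithin_le_nhds (s := Set.Ioi (0:ℝ)))
  rw [← h0]
  exact this
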